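/- Let S be a commutative ring equipped with a power-multiplicative nonarchimedean norm, and let S⟨T^{1/p^∞}⟩_ρ be the completion of S[T^{1/p^∞}] (polynomials in p-power roots of T) under the weighted Gauss norm |∑_i a_i T^i| = max_i |a_i| ρ^i for a fixed ρ ∈ (0,1). Then the weighted Gauss norm on S⟨T^{1/p^∞}⟩_ρ is power-multiplicative; if moreover the norm on S is multiplicative, so is the weighted Gauss norm. -/

import Mathlib

section GaussAux
variable {S : Type*} [CommRing S] {M : AddSubmonoid ℚ}

theorem ga_nmadd (nm : S → ℝ) (hnonneg : ∀ x, 0 ≤ nm x) (heq0 : ∀ x, nm x = 0 ↔ x = 0)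
    (hna : ∀ x y, nm (x - y) ≤ max (nm x) (nm y)) (x y : S) :
    nm (x + y) ≤ max (nm x) (nm y) := by
  have h0 : nm 0 = 0 := (heq0 0).2 rfl
  have hneg : nm (-y) ≤ nm y := by
    have h := hna 0 y
    rw [zero_sub, h0, max_eq_right (hnonneg y)] at h
    exact h
  have hxy : x + y = x - (-y) := by ring
  rw [hxy]
  exact (hna x (-y)).trans (max_le_max le_rfl hneg)

theorem ga_sum_le (nm : S → ℝ) (hnonneg : ∀ x, 0 ≤ nm x) (heq0 : ∀ x, nm x = 0 ↔ x = 0)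
    (hna : ∀ x y, nm (x - y) ≤ max (nm x) (nm y)) {ι : Type*} (s : Finset ι) (a : ι → S)
    {w c : ℝ} (hw : 0 < w) (hc : 0 ≤ c) (h : ∀ t ∈ s, nm (a t) * w ≤ c) :
    nm (∑ t ∈ s, a t) * w ≤ c := by
  induction s using Finset.cons_induction with
  | empty => simp only [Finset.sum_empty, (heq0 0).2 rfl, zero_mul]; exact hc
  | cons t s hts ih =>
    rw [Finset.sum_cons]
    have h1 := ga_nmadd nm hnonneg heq0 hna (a t) (∑ x ∈ s, a x)
    have h2 : nm (a t + ∑ x ∈ s, a x) * w ≤ max (nm (a t) * w) (nm (∑ x ∈ s, a x) * w) := by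
      rw [← max_mul_of_nonneg _ _ hw.le]
      exact mul_le_mul_of_nonneg_right h1 hw.le
    exact h2.trans (max_le (h t (Finset.mem_cons_self t s))
      (ih fun t ht => h t (Finset.mem_cons_of_mem ht)))

theorem ga_sum_lt (nm : S → ℝ) (hnonneg : ∀ x, 0 ≤ nm x) (heq0 : ∀ x, nm x = 0 ↔ x = 0)
    (hna : ∀ x y, nm (x - y) ≤ max (nm x) (nm y)) {ι : Type*} (s : Finset ι) (a : ι → S)
    {w c : ℝ} (hw : 0 < w) (hc : 0 < c) (h : ∀ t ∈ s, nm (a t) * w < c) :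
    nm (∑ t ∈ s, a t) * w < c := by
  induction s using Finset.cons_induction with
  | empty => simp only [Finset.sum_empty, (heq0 0).2 rfl, zero_mul]; exact hc
  | cons t s hts ih =>
    rw [Finset.sum_cons]
    have h1 := ga_nmadd nm hnonneg heq0 hna (a t) (∑ x ∈ s, a x)
    have h2 : nm (a t + ∑ x ∈ s, a x) * w ≤ max (nm (a t) * w) (nm (∑ x ∈ s, a x) * w) := by
      rw [← max_mul_of_nonneg _ _ hw.le]
      exact mul_le_mul_of_nonneg_right h1 hw.le
    exact lt_of_le_of_lt h2 (max_lt (h t (Finset.mem_cons_self t s))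
      (ih fun t ht => h t (Finset.mem_cons_of_mem ht)))

theorem ga_dom (nm : S → ℝ) (hnonneg : ∀ x, 0 ≤ nm x) (heq0 : ∀ x, nm x = 0 ↔ x = 0)
    (hna : ∀ x y, nm (x - y) ≤ max (nm x) (nm y)) {x y : S} {w c : ℝ} (hw : 0 < w)
    (hy : nm y * w = c) (hd : nm (x - y) * w < c) : nm x * w = c := by
  have A : nm x ≤ max (nm y) (nm (x - y)) := by
    have h := ga_nmadd nm hnonneg heq0 hna y (x - y)
    have e : y + (x - y) = x := by ring
    rwa [e] at h
  have B : nm y ≤ max (nm x) (nm (x - y)) := by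
    have h := hna x (x - y)
    have e : x - (x - y) = y := by ring
    rwa [e] at h
  have hle : nm x * w ≤ c := by
    rcases max_choice (nm y) (nm (x - y)) with h | h <;> rw [h] at A
    · exact le_of_le_of_eq (mul_le_mul_of_nonneg_right A hw.le) hy
    · exact (mul_le_mul_of_nonneg_right A hw.le).trans hd.le
  have hge : c ≤ nm x * w := by
    rcases max_choice (nm x) (nm (x - y)) with h | h <;> rw [h] at B
    · exact hy ▸ mul_le_mul_of_nonneg_right B hw.le
    · exact absurd (hy ▸ (mul_le_mul_of_nonneg_right B hw.le)) (not_le.mpr hd)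
  linarith



theorem ga_bdd (nm : S → ℝ) (hnonneg : ∀ x, 0 ≤ nm x) (heq0 : ∀ x, nm x = 0 ↔ x = 0)
    (ρ : ℝ) (hρ0 : 0 < ρ) (f : AddMonoidAlgebra S M) :
    BddAbove (Set.range fun q : M => nm (f.coeff q) * ρ ^ ((q : ℚ) : ℝ)) := by
  classical
  have hterm : ∀ q : M, 0 ≤ nm (f.coeff q) * ρ ^ ((q : ℚ) : ℝ) :=
    fun q => mul_nonneg (hnonneg _) (Real.rpow_pos_of_pos hρ0 _).le
  refine ⟨∑ q ∈ f.coeff.support, nm (f.coeff q) * ρ ^ ((q : ℚ) : ℝ), ?_⟩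
  rintro _ ⟨q, rfl⟩
  by_cases hq : q ∈ f.coeff.support
  · exact Finset.single_le_sum (fun i _ => hterm i) hq
  · have hq0 : f.coeff q = 0 := Finsupp.notMem_support_iff.mp hq
    show nm (f.coeff q) * ρ ^ ((q : ℚ) : ℝ) ≤ _
    rw [hq0, (heq0 0).2 rfl, zero_mul]
    exact Finset.sum_nonneg fun i _ => hterm i

theorem ga_le_G (nm : S → ℝ) (hnonneg : ∀ x, 0 ≤ nm x) (heq0 : ∀ x, nm x = 0 ↔ x = 0)
    (ρ : ℝ) (hρ0 : 0 < ρ) (f : AddMonoidAlgebra S M) (q : M) :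
    nm (f.coeff q) * ρ ^ ((q : ℚ) : ℝ) ≤ ⨆ r : M, nm (f.coeff r) * ρ ^ ((r : ℚ) : ℝ) :=
  le_ciSup (ga_bdd nm hnonneg heq0 ρ hρ0 f) q

theorem ga_max (nm : S → ℝ) (hnonneg : ∀ x, 0 ≤ nm x) (heq0 : ∀ x, nm x = 0 ↔ x = 0)
    (ρ : ℝ) (hρ0 : 0 < ρ) {f : AddMonoidAlgebra S M} (hf : f ≠ 0) :
    ∃ q₀ : M, f.coeff q₀ ≠ 0 ∧
      nm (f.coeff q₀) * ρ ^ ((q₀ : ℚ) : ℝ) = (⨆ r : M, nm (f.coeff r) * ρ ^ ((r : ℚ) : ℝ)) ∧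
      (∀ q < q₀, nm (f.coeff q) * ρ ^ ((q : ℚ) : ℝ) < ⨆ r : M, nm (f.coeff r) * ρ ^ ((r : ℚ) : ℝ)) ∧
      0 < ⨆ r : M, nm (f.coeff r) * ρ ^ ((r : ℚ) : ℝ) := by
  classical
  haveI : Nonempty M := ⟨0⟩
  set v : M → ℝ := fun q => nm (f.coeff q) * ρ ^ ((q : ℚ) : ℝ) with hv
  set c : ℝ := ⨆ r : M, v r with hc
  have hne : f.coeff.support.Nonempty := Finsupp.support_nonempty_iff.mpr (AddMonoidAlgebra.coeff_eq_zero.not.mpr hf)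
  have hvz : ∀ q : M, q ∉ f.coeff.support → v q = 0 := by
    intro q hq
    simp only [hv, Finsupp.notMem_support_iff.mp hq, (heq0 0).2 rfl, zero_mul]
  have hvnn : ∀ q : M, 0 ≤ v q :=
    fun q => mul_nonneg (hnonneg _) (Real.rpow_pos_of_pos hρ0 _).le
  obtain ⟨q₁, hq₁s, hq₁⟩ := Finset.exists_mem_eq_sup' hne v
  have hsup : c = f.coeff.support.sup' hne v := by
    apply le_antisymm
    · refine ciSup_le fun q => ?_
      by_cases hq : q ∈ f.coeff.support
      · exact Finset.le_sup' v hq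
      · rw [hvz q hq, hq₁]; exact hvnn q₁
    · exact Finset.sup'_le hne v fun q hq => ga_le_G nm hnonneg heq0 ρ hρ0 f q
  set A : Finset M := f.coeff.support.filter (fun q => c ≤ v q) with hA
  have hAne : A.Nonempty := ⟨q₁, Finset.mem_filter.mpr ⟨hq₁s, by rw [hsup, hq₁]⟩⟩
  set q₀ : M := A.min' hAne with hq₀def
  have hq₀A : q₀ ∈ A := A.min'_mem hAne
  obtain ⟨hq₀s, hq₀c⟩ := Finset.mem_filter.mp hq₀A
  have hq₀ne : f.coeff q₀ ≠ 0 := Finsupp.mem_support_iff.mp hq₀s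
  have heqc : v q₀ = c := le_antisymm (ga_le_G nm hnonneg heq0 ρ hρ0 f q₀) hq₀c
  have hcpos : 0 < c := by
    rw [← heqc, hv]
    have : 0 < nm (f.coeff q₀) := lt_of_le_of_ne (hnonneg _) (fun h => hq₀ne ((heq0 _).1 h.symm))
    exact mul_pos this (Real.rpow_pos_of_pos hρ0 _)
  refine ⟨q₀, hq₀ne, heqc, ?_, hcpos⟩
  intro q hq
  by_cases hqs : q ∈ f.coeff.support
  · by_contra hcon
    push_neg at hcon
    have hle : c ≤ v q := le_of_le_of_eq hcon (rfl)
    have : q₀ ≤ q := A.min'_le q (Finset.mem_filter.mpr ⟨hqs, hle⟩)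
    exact absurd hq (not_lt.mpr this)
  · show v q < c
    rw [hvz q hqs]; exact hcpos



theorem ga_key (nm : S → ℝ) (hnonneg : ∀ x, 0 ≤ nm x) (heq0 : ∀ x, nm x = 0 ↔ x = 0)
    (hna : ∀ x y, nm (x - y) ≤ max (nm x) (nm y))
    (hsm : ∀ x y, nm (x * y) ≤ nm x * nm y)
    (ρ : ℝ) (hρ0 : 0 < ρ)
    {f g : AddMonoidAlgebra S M} {q₀ r₀ : M} {cf cg : ℝ}
    (hcf : 0 < cf) (hcg : 0 < cg)
    (hf1 : ∀ q : M, nm (f.coeff q) * ρ ^ ((q : ℚ) : ℝ) ≤ cf)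
    (hf2 : ∀ q < q₀, nm (f.coeff q) * ρ ^ ((q : ℚ) : ℝ) < cf)
    (hg1 : ∀ q : M, nm (g.coeff q) * ρ ^ ((q : ℚ) : ℝ) ≤ cg)
    (hg2 : ∀ q < r₀, nm (g.coeff q) * ρ ^ ((q : ℚ) : ℝ) < cg) :
    (∀ x : M, nm ((f * g).coeff x) * ρ ^ ((x : ℚ) : ℝ) ≤ cf * cg) ∧
    (∀ x < q₀ + r₀, nm ((f * g).coeff x) * ρ ^ ((x : ℚ) : ℝ) < cf * cg) ∧
    (f.coeff q₀ ≠ 0 →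
      nm ((f * g).coeff (q₀ + r₀) - f.coeff q₀ * g.coeff r₀) * ρ ^ (((q₀ + r₀ : M) : ℚ) : ℝ) < cf * cg) := by
  classical
  have hw : ∀ x : M, (0:ℝ) < ρ ^ ((x : ℚ) : ℝ) := fun x => Real.rpow_pos_of_pos hρ0 _
  have hmulρ : ∀ a b : M, ρ ^ (((a + b : M) : ℚ) : ℝ) = ρ ^ ((a : ℚ) : ℝ) * ρ ^ ((b : ℚ) : ℝ) := by
    intro a b
    rw [← Real.rpow_add hρ0]
    congr 1
    push_cast
    ring
  -- strict per-term bound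
  have hterm_lt : ∀ a₁ a₂ : M, (a₁ < q₀ ∨ a₂ < r₀) →
      nm (f.coeff a₁ * g.coeff a₂) * (ρ ^ ((a₁ : ℚ) : ℝ) * ρ ^ ((a₂ : ℚ) : ℝ)) < cf * cg := by
    intro a₁ a₂ hcase
    have h1 : nm (f.coeff a₁ * g.coeff a₂) * (ρ ^ ((a₁ : ℚ) : ℝ) * ρ ^ ((a₂ : ℚ) : ℝ)) ≤
        (nm (f.coeff a₁) * ρ ^ ((a₁ : ℚ) : ℝ)) * (nm (g.coeff a₂) * ρ ^ ((a₂ : ℚ) : ℝ)) := by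
      have := mul_le_mul_of_nonneg_right (hsm (f.coeff a₁) (g.coeff a₂))
        (mul_nonneg (hw a₁).le (hw a₂).le)
      calc nm (f.coeff a₁ * g.coeff a₂) * (ρ ^ ((a₁ : ℚ) : ℝ) * ρ ^ ((a₂ : ℚ) : ℝ))
          ≤ nm (f.coeff a₁) * nm (g.coeff a₂) * (ρ ^ ((a₁ : ℚ) : ℝ) * ρ ^ ((a₂ : ℚ) : ℝ)) := this
        _ = (nm (f.coeff a₁) * ρ ^ ((a₁ : ℚ) : ℝ)) * (nm (g.coeff a₂) * ρ ^ ((a₂ : ℚ) : ℝ)) := by ring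
    refine lt_of_le_of_lt h1 ?_
    have hfa := hf1 a₁
    have hga := hg1 a₂
    have hfnn : 0 ≤ nm (f.coeff a₁) * ρ ^ ((a₁ : ℚ) : ℝ) := mul_nonneg (hnonneg _) (hw a₁).le
    have hgnn : 0 ≤ nm (g.coeff a₂) * ρ ^ ((a₂ : ℚ) : ℝ) := mul_nonneg (hnonneg _) (hw a₂).le
    rcases hcase with h | h
    · have := hf2 a₁ h
      nlinarith
    · have := hg2 a₂ h
      nlinarith
  have hterm_le : ∀ a₁ a₂ : M,
      nm (f.coeff a₁ * g.coeff a₂) * (ρ ^ ((a₁ : ℚ) : ℝ) * ρ ^ ((a₂ : ℚ) : ℝ)) ≤ cf * cg := by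
    intro a₁ a₂
    have h1 : nm (f.coeff a₁ * g.coeff a₂) * (ρ ^ ((a₁ : ℚ) : ℝ) * ρ ^ ((a₂ : ℚ) : ℝ)) ≤
        (nm (f.coeff a₁) * ρ ^ ((a₁ : ℚ) : ℝ)) * (nm (g.coeff a₂) * ρ ^ ((a₂ : ℚ) : ℝ)) := by
      have := mul_le_mul_of_nonneg_right (hsm (f.coeff a₁) (g.coeff a₂))
        (mul_nonneg (hw a₁).le (hw a₂).le)
      calc nm (f.coeff a₁ * g.coeff a₂) * (ρ ^ ((a₁ : ℚ) : ℝ) * ρ ^ ((a₂ : ℚ) : ℝ))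
          ≤ nm (f.coeff a₁) * nm (g.coeff a₂) * (ρ ^ ((a₁ : ℚ) : ℝ) * ρ ^ ((a₂ : ℚ) : ℝ)) := this
        _ = (nm (f.coeff a₁) * ρ ^ ((a₁ : ℚ) : ℝ)) * (nm (g.coeff a₂) * ρ ^ ((a₂ : ℚ) : ℝ)) := by ring
    exact h1.trans (mul_le_mul (hf1 a₁) (hg1 a₂)
      (mul_nonneg (hnonneg _) (hw a₂).le) hcf.le)
  have hnm0 : nm (0 : S) = 0 := (heq0 0).2 rfl
  refine ⟨?_, ?_, ?_⟩
  · -- part (i)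
    intro x
    rw [AddMonoidAlgebra.coeff_mul]
    simp only [Finsupp.sum]
    refine ga_sum_le nm hnonneg heq0 hna _ _ (hw x) (mul_pos hcf hcg).le ?_
    intro a₁ _
    refine ga_sum_le nm hnonneg heq0 hna _ _ (hw x) (mul_pos hcf hcg).le ?_
    intro a₂ _
    by_cases h : a₁ + a₂ = x
    · rw [if_pos h, ← h, hmulρ]
      exact hterm_le a₁ a₂
    · rw [if_neg h, hnm0, zero_mul]
      exact (mul_pos hcf hcg).le
  · -- part (ii)
    intro x hx
    rw [AddMonoidAlgebra.coeff_mul]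
    simp only [Finsupp.sum]
    refine ga_sum_lt nm hnonneg heq0 hna _ _ (hw x) (mul_pos hcf hcg) ?_
    intro a₁ _
    refine ga_sum_lt nm hnonneg heq0 hna _ _ (hw x) (mul_pos hcf hcg) ?_
    intro a₂ _
    by_cases h : a₁ + a₂ = x
    · rw [if_pos h, ← h, hmulρ]
      refine hterm_lt a₁ a₂ ?_
      by_contra hcon
      push_neg at hcon
      have h1 : (q₀ : ℚ) ≤ a₁ := hcon.1
      have h2 : (r₀ : ℚ) ≤ a₂ := hcon.2
      have hx' : (x : ℚ) < (q₀ : ℚ) + (r₀ : ℚ) := hx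
      have hsum : (a₁ : ℚ) + (a₂ : ℚ) = (x : ℚ) := by
        rw [← h]; push_cast; ring
      linarith
    · rw [if_neg h, hnm0, zero_mul]
      exact mul_pos hcf hcg
  · -- part (iii)
    intro hq₀ne
    have hq₀s : q₀ ∈ f.coeff.support := Finsupp.mem_support_iff.mpr hq₀ne
    set x : M := q₀ + r₀ with hxdef
    set φ : M → S := fun a₁ => ∑ a₂ ∈ g.coeff.support, (if a₁ + a₂ = x then f.coeff a₁ * g.coeff a₂ else 0)
      with hφ
    have happ : (f * g).coeff x = ∑ a₁ ∈ f.coeff.support, φ a₁ := by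
      rw [AddMonoidAlgebra.coeff_mul]
      simp only [Finsupp.sum, hφ]
    have hφq₀ : φ q₀ = f.coeff q₀ * g.coeff r₀ := by
      rw [hφ]
      simp only
      rw [Finset.sum_eq_single r₀]
      · rw [if_pos rfl]
      · intro b _ hb
        rw [if_neg]
        intro hcon
        apply hb
        have : (b : ℚ) = (r₀ : ℚ) := by
          have h1 : (q₀ : ℚ) + (b : ℚ) = (q₀ : ℚ) + (r₀ : ℚ) := by
            rw [show ((q₀:ℚ) + (b:ℚ)) = ((q₀ + b : M) : ℚ) by push_cast; ring, hcon, hxdef]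
            push_cast; ring
          linarith
        exact Subtype.ext this
      · intro hr
        rw [Finsupp.notMem_support_iff.mp hr, mul_zero, if_pos rfl]
    have hsplit : (f * g).coeff x - f.coeff q₀ * g.coeff r₀ = ∑ a₁ ∈ f.coeff.support.erase q₀, φ a₁ := by
      rw [happ, ← Finset.add_sum_erase _ φ hq₀s, hφq₀]
      ring
    rw [hsplit]
    refine ga_sum_lt nm hnonneg heq0 hna _ _ (hw x) (mul_pos hcf hcg) ?_
    intro a₁ ha₁
    have ha₁ne : a₁ ≠ q₀ := Finset.ne_of_mem_erase ha₁
    rw [hφ]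
    simp only
    refine ga_sum_lt nm hnonneg heq0 hna _ _ (hw x) (mul_pos hcf hcg) ?_
    intro a₂ _
    by_cases h : a₁ + a₂ = x
    · rw [if_pos h, ← h, hmulρ]
      refine hterm_lt a₁ a₂ ?_
      have hsum : (a₁ : ℚ) + (a₂ : ℚ) = (q₀ : ℚ) + (r₀ : ℚ) := by
        have := congrArg (fun t : M => (t : ℚ)) h
        push_cast at this
        rw [hxdef] at this
        push_cast at this
        linarith [this]
      rcases lt_trichotomy (a₁ : ℚ) (q₀ : ℚ) with hlt | heqq | hgt
      · exact Or.inl hlt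
      · exact absurd (Subtype.ext heqq) ha₁ne
      · exact Or.inr (show (a₂ : ℚ) < (r₀ : ℚ) by linarith)
    · rw [if_neg h, hnm0, zero_mul]
      exact mul_pos hcf hcg

theorem ga_pow (nm : S → ℝ) (hnonneg : ∀ x, 0 ≤ nm x) (heq0 : ∀ x, nm x = 0 ↔ x = 0)
    (hna : ∀ x y, nm (x - y) ≤ max (nm x) (nm y))
    (hsm : ∀ x y, nm (x * y) ≤ nm x * nm y)
    (ρ : ℝ) (hρ0 : 0 < ρ)
    {f : AddMonoidAlgebra S M} {q₀ : M} {cf : ℝ} (hcf : 0 < cf) (hq₀ : f.coeff q₀ ≠ 0)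
    (hf1 : ∀ q : M, nm (f.coeff q) * ρ ^ ((q : ℚ) : ℝ) ≤ cf)
    (hf2 : ∀ q < q₀, nm (f.coeff q) * ρ ^ ((q : ℚ) : ℝ) < cf) :
    ∀ n : ℕ, (∀ x : M, nm ((f ^ (n+1)).coeff x) * ρ ^ ((x : ℚ) : ℝ) ≤ cf ^ (n+1)) ∧
      (∀ x < (n+1) • q₀, nm ((f ^ (n+1)).coeff x) * ρ ^ ((x : ℚ) : ℝ) < cf ^ (n+1)) ∧
      nm ((f ^ (n+1)).coeff ((n+1) • q₀) - (f.coeff q₀) ^ (n+1)) * ρ ^ ((((n+1) • q₀ : M) : ℚ) : ℝ)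
        < cf ^ (n+1) := by
  have hw : ∀ x : M, (0:ℝ) < ρ ^ ((x : ℚ) : ℝ) := fun x => Real.rpow_pos_of_pos hρ0 _
  have hnm0 : nm (0 : S) = 0 := (heq0 0).2 rfl
  have hmulρ : ∀ a b : M, ρ ^ (((a + b : M) : ℚ) : ℝ) = ρ ^ ((a : ℚ) : ℝ) * ρ ^ ((b : ℚ) : ℝ) := by
    intro a b
    rw [← Real.rpow_add hρ0]
    congr 1
    push_cast
    ring
  intro n
  induction n with
  | zero =>
    refine ⟨?_, ?_, ?_⟩
    · intro x; rw [pow_one, pow_one]; exact hf1 x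
    · intro x hx
      rw [pow_one, pow_one]
      exact hf2 x (by rwa [one_nsmul] at hx)
    · rw [pow_one, pow_one, one_nsmul, sub_self, hnm0, zero_mul, pow_one]
      exact hcf
  | succ n ih =>
    obtain ⟨ih1, ih2, ih3⟩ := ih
    have key := ga_key nm hnonneg heq0 hna hsm ρ hρ0 hcf (pow_pos hcf (n+1))
      hf1 hf2 ih1 ih2
    have hee : (n + 1 + 1) • q₀ = q₀ + (n+1) • q₀ := succ_nsmul' q₀ (n+1)
    refine ⟨?_, ?_, ?_⟩
    · intro x
      rw [pow_succ' f (n+1), pow_succ' cf (n+1)]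
      exact key.1 x
    · intro x hx
      rw [pow_succ' f (n+1), pow_succ' cf (n+1)]
      exact key.2.1 x (by rwa [hee] at hx)
    · rw [pow_succ' f (n+1), pow_succ' cf (n+1), pow_succ' (f.coeff q₀) (n+1), hee]
      set e : M := (n+1) • q₀ with hedef
      set X : S := (f * f ^ (n+1)).coeff (q₀ + e) with hX
      set Z : S := f.coeff q₀ * (f ^ (n+1)).coeff e with hZ
      set Y : S := f.coeff q₀ * (f.coeff q₀) ^ (n+1) with hY
      have hA : nm (X - Z) * ρ ^ (((q₀ + e : M) : ℚ) : ℝ) < cf * cf ^ (n+1) := key.2.2 hq₀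
      have hB : nm (Z - Y) * ρ ^ (((q₀ + e : M) : ℚ) : ℝ) < cf * cf ^ (n+1) := by
        have hZY : Z - Y = f.coeff q₀ * ((f ^ (n+1)).coeff e - (f.coeff q₀) ^ (n+1)) := by
          rw [hZ, hY]; ring
        rw [hZY, hmulρ]
        have h1 : nm (f.coeff q₀ * ((f ^ (n+1)).coeff e - (f.coeff q₀) ^ (n+1))) ≤
            nm (f.coeff q₀) * nm ((f ^ (n+1)).coeff e - (f.coeff q₀) ^ (n+1)) := hsm _ _
        have h2 := ih3
        have h3 := hf1 q₀
        have h4 := hnonneg (f.coeff q₀)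
        have h5 := hnonneg ((f ^ (n+1)).coeff e - (f.coeff q₀) ^ (n+1))
        have h6 := (hw q₀).le
        have h7 := (hw e).le
        nlinarith [hw q₀, hw e, mul_nonneg h4 h6, mul_nonneg h5 h7,
          mul_le_mul_of_nonneg_right h1 (mul_nonneg h6 h7)]
      have hXY : X - Y = (X - Z) + (Z - Y) := by ring
      rw [hXY]
      have h := ga_nmadd nm hnonneg heq0 hna (X - Z) (Z - Y)
      have h2 : nm ((X - Z) + (Z - Y)) * ρ ^ (((q₀ + e : M) : ℚ) : ℝ) ≤
          max (nm (X - Z) * ρ ^ (((q₀ + e : M) : ℚ) : ℝ))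
              (nm (Z - Y) * ρ ^ (((q₀ + e : M) : ℚ) : ℝ)) := by
        rw [← max_mul_of_nonneg _ _ (hw (q₀ + e)).le]
        exact mul_le_mul_of_nonneg_right h (hw (q₀ + e)).le
      exact lt_of_le_of_lt h2 (max_lt hA hB)
end GaussAux

/-- The additive monoid `ℤ[1/p]_{≥0}` of nonnegative `p`-power-denominator rationals,
the exponents of the perfect polynomial ring `S[T^{1/p^∞}]`. -/
def pAdicExps (p : ℕ) : AddSubmonoid ℚ where
  carrier := {q | 0 ≤ q ∧ ∃ (n k : ℕ), q * (p : ℚ) ^ k = n}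
  zero_mem' := ⟨le_refl 0, 0, 0, by simp⟩
  add_mem' := by
    rintro a b ⟨ha, n, k, hk⟩ ⟨hb, m, l, hl⟩
    refine ⟨add_nonneg ha hb, n * p ^ l + m * p ^ k, k + l, ?_⟩
    push_cast
    linear_combination (p : ℚ) ^ l * hk + (p : ℚ) ^ k * hl

/-- The weighted Gauss norm on `S[T^{1/p^∞}]` (with `|T| = ρ`) is power-multiplicative
when the norm on `S` is, and multiplicative when the norm on `S` is. -/
theorem stmt13 (p : ℕ) (hp : p.Prime) {S : Type*} [CommRing S]
    (nm : S → ℝ) (hnonneg : ∀ x, 0 ≤ nm x) (heq0 : ∀ x, nm x = 0 ↔ x = 0)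
    (hna : ∀ x y, nm (x - y) ≤ max (nm x) (nm y))
    (hpm : ∀ (x : S) (n : ℕ), 1 ≤ n → nm (x ^ n) = nm x ^ n)
    (hsm : ∀ x y, nm (x * y) ≤ nm x * nm y)
    (ρ : ℝ) (hρ0 : 0 < ρ) (hρ1 : ρ < 1) :
    let G : AddMonoidAlgebra S (pAdicExps p) → ℝ :=
      fun f => ⨆ q : pAdicExps p, nm (f.coeff q) * Real.rpow ρ ((q : ℚ) : ℝ)
    (∀ (f : AddMonoidAlgebra S (pAdicExps p)) (n : ℕ), 1 ≤ n → G (f ^ n) = G f ^ n) ∧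
    ((∀ x y : S, nm (x * y) = nm x * nm y) →
      ∀ f g : AddMonoidAlgebra S (pAdicExps p), G (f * g) = G f * G g) := by
  classical
  intro G
  haveI : Nonempty (pAdicExps p) := ⟨0⟩
  have hnm0 : nm (0 : S) = 0 := (heq0 0).2 rfl
  have hw : ∀ x : pAdicExps p, (0:ℝ) < ρ ^ ((x : ℚ) : ℝ) :=
    fun x => Real.rpow_pos_of_pos hρ0 _
  have hmulρ : ∀ a b : pAdicExps p,
      ρ ^ (((a + b : pAdicExps p) : ℚ) : ℝ) = ρ ^ ((a : ℚ) : ℝ) * ρ ^ ((b : ℚ) : ℝ) := by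
    intro a b
    rw [← Real.rpow_add hρ0]
    congr 1
    push_cast
    ring
  have hG0 : G 0 = 0 := by
    show (⨆ q : pAdicExps p,
      nm ((0 : AddMonoidAlgebra S (pAdicExps p)).coeff q) * ρ ^ ((q : ℚ) : ℝ)) = 0
    have he : ∀ q : pAdicExps p,
        nm ((0 : AddMonoidAlgebra S (pAdicExps p)).coeff q) * ρ ^ ((q : ℚ) : ℝ) = 0 := by
      intro q
      rw [AddMonoidAlgebra.coeff_zero, Finsupp.coe_zero, Pi.zero_apply, hnm0, zero_mul]
    simp only [he]
    exact ciSup_const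
  constructor
  · -- power-multiplicativity
    intro f n hn
    obtain ⟨m, rfl⟩ : ∃ m, n = m + 1 := ⟨n - 1, by omega⟩
    by_cases hf : f = 0
    · rw [hf, zero_pow (by omega : m + 1 ≠ 0), hG0, zero_pow (by omega : m + 1 ≠ 0)]
    · obtain ⟨q₀, hq₀ne, hfeq, hf2, hGpos⟩ := ga_max nm hnonneg heq0 ρ hρ0 hf
      show (⨆ x : pAdicExps p, nm ((f ^ (m+1)).coeff x) * ρ ^ ((x : ℚ) : ℝ)) =
        (⨆ r : pAdicExps p, nm (f.coeff r) * ρ ^ ((r : ℚ) : ℝ)) ^ (m+1)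
      obtain ⟨h1, h2, h3⟩ := ga_pow nm hnonneg heq0 hna hsm ρ hρ0 hGpos hq₀ne
        (fun q => ga_le_G nm hnonneg heq0 ρ hρ0 f q) hf2 m
      have hweq : ρ ^ ((((m+1) • q₀ : pAdicExps p) : ℚ) : ℝ) =
          (ρ ^ ((q₀ : ℚ) : ℝ)) ^ (m+1) := by
        have hq : (((m+1) • q₀ : pAdicExps p) : ℚ) = (q₀ : ℚ) * ((m+1 : ℕ) : ℚ) := by
          push_cast
          ring
        have hc : ((((m+1) • q₀ : pAdicExps p) : ℚ) : ℝ) = ((q₀ : ℚ) : ℝ) * ((m+1 : ℕ) : ℝ) := by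
          rw [hq]
          push_cast
          ring
        rw [hc, Real.rpow_mul hρ0.le, Real.rpow_natCast]
      have hy : nm ((f.coeff q₀) ^ (m+1)) * ρ ^ ((((m+1) • q₀ : pAdicExps p) : ℚ) : ℝ) =
          (⨆ r : pAdicExps p, nm (f.coeff r) * ρ ^ ((r : ℚ) : ℝ)) ^ (m+1) := by
        rw [hpm (f.coeff q₀) (m+1) (by omega), hweq, ← mul_pow, hfeq]
      have hval := ga_dom nm hnonneg heq0 hna (hw ((m+1) • q₀)) hy h3
      apply le_antisymm
      · exact ciSup_le fun x => h1 x
      · calc (⨆ r : pAdicExps p, nm (f.coeff r) * ρ ^ ((r : ℚ) : ℝ)) ^ (m+1)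
            = nm ((f ^ (m+1)).coeff ((m+1) • q₀)) * ρ ^ ((((m+1) • q₀ : pAdicExps p) : ℚ) : ℝ) :=
              hval.symm
          _ ≤ _ := ga_le_G nm hnonneg heq0 ρ hρ0 (f ^ (m+1)) ((m+1) • q₀)
  · -- multiplicativity
    intro hmul f g
    by_cases hf : f = 0
    · rw [hf, zero_mul, hG0, zero_mul]
    by_cases hg : g = 0
    · rw [hg, mul_zero, hG0, mul_zero]
    obtain ⟨q₀, hq₀ne, hfeq, hf2, hGfpos⟩ := ga_max nm hnonneg heq0 ρ hρ0 hf
    obtain ⟨r₀, hr₀ne, hgeq, hg2, hGgpos⟩ := ga_max nm hnonneg heq0 ρ hρ0 hg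
    show (⨆ x : pAdicExps p, nm ((f * g).coeff x) * ρ ^ ((x : ℚ) : ℝ)) =
      (⨆ r : pAdicExps p, nm (f.coeff r) * ρ ^ ((r : ℚ) : ℝ)) *
      (⨆ r : pAdicExps p, nm (g.coeff r) * ρ ^ ((r : ℚ) : ℝ))
    obtain ⟨k1, k2, k3⟩ := ga_key nm hnonneg heq0 hna hsm ρ hρ0 hGfpos hGgpos
      (fun q => ga_le_G nm hnonneg heq0 ρ hρ0 f q) hf2
      (fun q => ga_le_G nm hnonneg heq0 ρ hρ0 g q) hg2
    have hy : nm (f.coeff q₀ * g.coeff r₀) * ρ ^ (((q₀ + r₀ : pAdicExps p) : ℚ) : ℝ) =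
        (⨆ r : pAdicExps p, nm (f.coeff r) * ρ ^ ((r : ℚ) : ℝ)) *
        (⨆ r : pAdicExps p, nm (g.coeff r) * ρ ^ ((r : ℚ) : ℝ)) := by
      rw [hmul, hmulρ, ← hfeq, ← hgeq]
      ring
    have hval := ga_dom nm hnonneg heq0 hna (hw (q₀ + r₀)) hy (k3 hq₀ne)
    apply le_antisymm
    · exact ciSup_le fun x => k1 x
    · calc (⨆ r : pAdicExps p, nm (f.coeff r) * ρ ^ ((r : ℚ) : ℝ)) *
            (⨆ r : pAdicExps p, nm (g.coeff r) * ρ ^ ((r : ℚ) : ℝ))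
          = nm ((f * g).coeff (q₀ + r₀)) * ρ ^ (((q₀ + r₀ : pAdicExps p) : ℚ) : ℝ) := hval.symm
        _ ≤ _ := ga_le_G nm hnonneg heq0 ρ hρ0 (f * g) (q₀ + r₀)
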